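/- Consider the elastic von Karman beam system on [L₀,L]×[0,T+h] and its time-difference (u_d, v_d) with step h, and let M > 0. Set σ₀ = (L − L₀)T²/4, φ(x,t) = (L − x)T² − 5(L − L₀)(t − T/2)², and for τ ≥ 1 define H_d(t) = ∫_{L₀}^{L} (β₂ u_dt u_dx + ρ₂ v_dt v_dx) e^{τφ(x,t)}(L − x) dx + μ₂ ∫_{L₀}^{L} u_dtx u_dxx e^{τφ(x,t)}(L − x) dx + β₂ ∫_{L₀}^{L} u_dt² e^{τφ(x,t)}[τT²(L − x) + 1] dx + μ₂ τT² ∫_{L₀}^{L} u_dtx u_d e^{τφ(x,t)}[τT²(L − x) + 2] dx. Assume u_d(L₀,t) = u_dx(L₀,t) = v_d(L₀,t) = 0 for t ∈ [0,T]. Then there exists C₃ > 0, depending only on β₂, μ₂, λ₂, ρ₂, L₀, L, T, h, M, such that for every M-bounded solution (u,v) and every τ ≥ 1: H_d(0) − H_d(T) ≥ −C₃ (E_d(T) + E_d(0)) τ² e^{−τσ₀}. -/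

import Mathlib

open MeasureTheory

noncomputable section

/-- Partial derivative in the first (space) variable. -/
def pdx (f : ℝ → ℝ → ℝ) : ℝ → ℝ → ℝ := fun x t => deriv (fun y => f y t) x

/-- Partial derivative in the second (time) variable. -/
def pdt (f : ℝ → ℝ → ℝ) : ℝ → ℝ → ℝ := fun x t => deriv (fun s => f x s) t

/-- Time difference with step `h`. -/
def tdiff (h : ℝ) (f : ℝ → ℝ → ℝ) : ℝ → ℝ → ℝ := fun x t => f x (t + h) - f x t

/-- The elastic full von Karman beam system on `[L₀,L] × [0,Th]`. -/
def VKBeam (β₂ μ₂ lam₂ ρ₂ L₀ L Th : ℝ) (u v : ℝ → ℝ → ℝ) : Prop :=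
  ∀ x ∈ Set.Icc L₀ L, ∀ t ∈ Set.Icc (0:ℝ) Th,
    β₂ * pdt (pdt u) x t - μ₂ * pdx (pdx (pdt (pdt u))) x t
        + lam₂ * pdx (pdx (pdx (pdx u))) x t
        - pdx (fun y s => pdx u y s * (pdx v y s + (pdx u y s) ^ 2 / 2)) x t = 0 ∧
    ρ₂ * pdt (pdt v) x t - pdx (fun y s => pdx v y s + (pdx u y s) ^ 2 / 2) x t = 0

/-- `f` has all partial derivatives of order at most 4 bounded by `M` on
`[L₀,L] × [0,Th]`. -/
def MBounded (M L₀ L Th : ℝ) (f : ℝ → ℝ → ℝ) : Prop :=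
  ∀ k : ℕ, k ≤ 4 → ∀ x ∈ Set.Icc L₀ L, ∀ t ∈ Set.Icc (0:ℝ) Th,
    ‖iteratedFDeriv ℝ k (Function.uncurry f) (x, t)‖ ≤ M

/-- Energy of the time difference `(u_d, v_d)`. -/
def Ed (β₂ μ₂ lam₂ ρ₂ L₀ L h : ℝ) (u v : ℝ → ℝ → ℝ) (t : ℝ) : ℝ :=
  (1 / 2) * (β₂ * (∫ x in L₀..L, (pdt (tdiff h u) x t) ^ 2)
    + μ₂ * (∫ x in L₀..L, (pdx (pdt (tdiff h u)) x t) ^ 2)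
    + lam₂ * (∫ x in L₀..L, (pdx (pdx (tdiff h u)) x t) ^ 2)
    + (∫ x in L₀..L, (pdx (tdiff h v) x t
        + (1 / 2) * pdx (tdiff h u) x t * (pdx u x (t + h) + pdx u x t)) ^ 2)
    + ρ₂ * (∫ x in L₀..L, (pdt (tdiff h v) x t) ^ 2))

/-- The multiplier weight `φ(x,t) = (L − x)T² − 5(L − L₀)(t − T/2)²`. -/
def phiW (L₀ L T : ℝ) : ℝ → ℝ → ℝ := fun x t =>
  (L - x) * T ^ 2 - 5 * (L - L₀) * (t - T / 2) ^ 2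

/-- The boundary-in-time functional `H_d(t)` from the multiplier estimate. -/
def Hd (β₂ μ₂ ρ₂ L₀ L T h τ : ℝ) (u v : ℝ → ℝ → ℝ) (t : ℝ) : ℝ :=
  (∫ x in L₀..L,
      (β₂ * pdt (tdiff h u) x t * pdx (tdiff h u) x t
        + ρ₂ * pdt (tdiff h v) x t * pdx (tdiff h v) x t)
        * Real.exp (τ * phiW L₀ L T x t) * (L - x))
  + μ₂ * (∫ x in L₀..L,
      pdx (pdt (tdiff h u)) x t * pdx (pdx (tdiff h u)) x t
        * Real.exp (τ * phiW L₀ L T x t) * (L - x))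
  + β₂ * (∫ x in L₀..L,
      (pdt (tdiff h u) x t) ^ 2
        * Real.exp (τ * phiW L₀ L T x t) * (τ * T ^ 2 * (L - x) + 1))
  + μ₂ * τ * T ^ 2 * (∫ x in L₀..L,
      pdx (pdt (tdiff h u)) x t * tdiff h u x t
        * Real.exp (τ * phiW L₀ L T x t) * (τ * T ^ 2 * (L - x) + 2))

end

section AuxLemmas
open Function

lemma hasDerivAt_slice_x (f : ℝ → ℝ → ℝ) (hf : Differentiable ℝ (uncurry f)) (x t : ℝ) :
    HasDerivAt (fun y => f y t) (fderiv ℝ (uncurry f) (x, t) (1, 0)) x := by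
  have h1 : HasDerivAt (fun y : ℝ => (y, t)) ((1 : ℝ), (0 : ℝ)) x :=
    (hasDerivAt_id x).prodMk (hasDerivAt_const x t)
  exact (hf (x, t)).hasFDerivAt.comp_hasDerivAt x h1

lemma hasDerivAt_slice_t (f : ℝ → ℝ → ℝ) (hf : Differentiable ℝ (uncurry f)) (x t : ℝ) :
    HasDerivAt (fun s => f x s) (fderiv ℝ (uncurry f) (x, t) (0, 1)) t := by
  have h1 : HasDerivAt (fun s : ℝ => (x, s)) ((0 : ℝ), (1 : ℝ)) t :=
    (hasDerivAt_const t x).prodMk (hasDerivAt_id t)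
  exact (hf (x, t)).hasFDerivAt.comp_hasDerivAt t h1

lemma smooth_pdx (f : ℝ → ℝ → ℝ) (hf : ContDiff ℝ (((⊤ : ℕ∞)) : WithTop ℕ∞) (uncurry f)) :
    ContDiff ℝ (((⊤ : ℕ∞)) : WithTop ℕ∞) (uncurry (pdx f)) := by
  have h : uncurry (pdx f) = fun p : ℝ × ℝ => fderiv ℝ (uncurry f) p ((1:ℝ), (0:ℝ)) := by
    funext p
    exact (hasDerivAt_slice_x f (hf.differentiable (by simp)) p.1 p.2).deriv
  rw [h]
  exact (hf.fderiv_right (le_of_eq rfl)).clm_apply contDiff_const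

lemma smooth_pdt (f : ℝ → ℝ → ℝ) (hf : ContDiff ℝ (((⊤ : ℕ∞)) : WithTop ℕ∞) (uncurry f)) :
    ContDiff ℝ (((⊤ : ℕ∞)) : WithTop ℕ∞) (uncurry (pdt f)) := by
  have h : uncurry (pdt f) = fun p : ℝ × ℝ => fderiv ℝ (uncurry f) p ((0:ℝ), (1:ℝ)) := by
    funext p
    exact (hasDerivAt_slice_t f (hf.differentiable (by simp)) p.1 p.2).deriv
  rw [h]
  exact (hf.fderiv_right (le_of_eq rfl)).clm_apply contDiff_const

lemma smooth_tdiff (h : ℝ) (f : ℝ → ℝ → ℝ) (hf : ContDiff ℝ (((⊤ : ℕ∞)) : WithTop ℕ∞) (uncurry f)) :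
    ContDiff ℝ (((⊤ : ℕ∞)) : WithTop ℕ∞) (uncurry (tdiff h f)) := by
  have he : uncurry (tdiff h f) = fun p : ℝ × ℝ => uncurry f (p.1, p.2 + h) - uncurry f p := rfl
  rw [he]
  exact (hf.comp (contDiff_fst.prodMk (contDiff_snd.add contDiff_const))).sub hf

lemma cont_slice (f : ℝ → ℝ → ℝ) (hf : ContDiff ℝ (((⊤ : ℕ∞)) : WithTop ℕ∞) (uncurry f)) (t : ℝ) :
    Continuous (fun x => f x t) :=
  hf.continuous.comp (continuous_id.prodMk continuous_const)

lemma diff_slice (f : ℝ → ℝ → ℝ) (hf : ContDiff ℝ (((⊤ : ℕ∞)) : WithTop ℕ∞) (uncurry f)) (t : ℝ) :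
    Differentiable ℝ (fun x => f x t) :=
  fun x => (hasDerivAt_slice_x f (hf.differentiable (by simp)) x t).differentiableAt

lemma abs_mul_le_half_sq (a b : ℝ) : |a * b| ≤ (a ^ 2 + b ^ 2) / 2 := by
  rw [abs_mul]
  nlinarith [sq_nonneg (|a| - |b|), sq_abs a, sq_abs b, abs_nonneg a, abs_nonneg b]

lemma cs_integral (a b : ℝ) (hab : a ≤ b) (f : ℝ → ℝ) (hf : Continuous f) :
    (∫ x in a..b, f x) ^ 2 ≤ (b - a) * ∫ x in a..b, (f x) ^ 2 := by
  rcases eq_or_lt_of_le hab with rfl | hab'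
  · simp
  set A := ∫ x in a..b, (f x) ^ 2 with hA_def
  have hA : 0 ≤ A := intervalIntegral.integral_nonneg hab fun x _ => sq_nonneg _
  have key : ∀ c : ℝ, 0 < c → |∫ x in a..b, f x| ≤ A / (2 * c) + c * (b - a) / 2 := by
    intro c hc
    have h1 : |∫ x in a..b, f x| ≤ ∫ x in a..b, |f x| :=
      intervalIntegral.abs_integral_le_integral_abs hab
    have h2 : ∫ x in a..b, |f x| ≤ ∫ x in a..b, ((f x) ^ 2 / (2 * c) + c / 2) := by
      apply intervalIntegral.integral_mono_on hab (hf.abs.intervalIntegrable a b)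
        ((by fun_prop : Continuous fun x => (f x) ^ 2 / (2 * c) + c / 2).intervalIntegrable a b)
      intro x _
      have hsq : (|f x| - c) ^ 2 = f x ^ 2 - 2 * c * |f x| + c ^ 2 := by
        rw [sub_sq, sq_abs]; ring
      have h0 : 0 ≤ (|f x| - c) ^ 2 / (2 * c) := div_nonneg (sq_nonneg _) (by linarith)
      have hkey : f x ^ 2 / (2 * c) + c / 2 - |f x| = (|f x| - c) ^ 2 / (2 * c) := by
        rw [hsq]; field_simp; ring
      linarith
    have h3 : ∫ x in a..b, ((f x) ^ 2 / (2 * c) + c / 2) = A / (2 * c) + c * (b - a) / 2 := by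
      rw [intervalIntegral.integral_add ((by fun_prop : Continuous fun x => (f x) ^ 2 / (2 * c)).intervalIntegrable a b)
        (intervalIntegrable_const), intervalIntegral.integral_div,
        intervalIntegral.integral_const]
      rw [hA_def]
      simp only [smul_eq_mul]; ring
    linarith
  rcases eq_or_lt_of_le hA with hA0 | hApos
  · have h0 : |∫ x in a..b, f x| ≤ 0 := by
      refine le_of_forall_pos_le_add fun ε hε => ?_
      have hba : (0:ℝ) < b - a := by linarith
      have := key (2 * ε / (b - a)) (div_pos (by linarith) hba)
      rw [← hA0] at this
      simp only [zero_div] at this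
      have heq : 0 + 2 * ε / (b - a) * (b - a) / 2 = ε := by field_simp; ring
      linarith
    have : (∫ x in a..b, f x) = 0 := abs_eq_zero.mp (le_antisymm h0 (abs_nonneg _))
    rw [this, ← hA0]
    simp
  · set c := Real.sqrt (A / (b - a)) with hc_def
    have hba : (0:ℝ) < b - a := by linarith
    have hcpos : 0 < c := Real.sqrt_pos.mpr (div_pos hApos hba)
    have hc2 : c ^ 2 = A / (b - a) := Real.sq_sqrt (div_pos hApos hba).le
    have hcA : A = c ^ 2 * (b - a) := by rw [hc2]; field_simp
    have hk := key c hcpos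
    have habs : (∫ x in a..b, f x) ^ 2 ≤ (A / (2 * c) + c * (b - a) / 2) ^ 2 := by
      have hd : 0 ≤ A / (2 * c) := div_nonneg hA (by linarith)
      have hd2 : 0 ≤ c * (b - a) / 2 := by
        apply div_nonneg _ (by norm_num)
        exact mul_nonneg hcpos.le hba.le
      nlinarith [abs_nonneg (∫ x in a..b, f x), sq_abs (∫ x in a..b, f x)]
    have heq : (A / (2 * c) + c * (b - a) / 2) ^ 2 = (b - a) * A := by
      rw [hcA]
      have hcne : c ≠ 0 := ne_of_gt hcpos
      field_simp
      ring
    linarith [habs, heq.le]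

lemma poincare (a b : ℝ) (hab : a ≤ b) (g : ℝ → ℝ) (hg : Differentiable ℝ g)
    (hg' : Continuous (deriv g)) (h0 : g a = 0) :
    ∫ x in a..b, (g x) ^ 2 ≤ (b - a) ^ 2 * ∫ x in a..b, (deriv g x) ^ 2 := by
  have hgc : Continuous g := hg.continuous
  have key : ∀ x ∈ Set.Icc a b, (g x) ^ 2 ≤ (b - a) * ∫ s in a..b, (deriv g s) ^ 2 := by
    intro x hx
    have hax : a ≤ x := hx.1
    have hxb : x ≤ b := hx.2
    have hftc : ∫ s in a..x, deriv g s = g x - g a := by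
      apply intervalIntegral.integral_deriv_eq_sub
      · intro s _; exact hg s
      · exact hg'.intervalIntegrable a x
    have hgx : g x = ∫ s in a..x, deriv g s := by rw [hftc, h0]; ring
    have hcs : (∫ s in a..x, deriv g s) ^ 2 ≤ (x - a) * ∫ s in a..x, (deriv g s) ^ 2 :=
      cs_integral a x hax (deriv g) hg'
    have hmono : ∫ s in a..x, (deriv g s) ^ 2 ≤ ∫ s in a..b, (deriv g s) ^ 2 := by
      apply intervalIntegral.integral_mono_interval le_rfl hax hxb
      · exact Filter.Eventually.of_forall fun s => sq_nonneg _
      · exact ((hg'.pow 2).intervalIntegrable a b)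
    have hxann : 0 ≤ ∫ s in a..x, (deriv g s) ^ 2 :=
      intervalIntegral.integral_nonneg hax fun s _ => sq_nonneg _
    calc (g x) ^ 2 = (∫ s in a..x, deriv g s) ^ 2 := by rw [hgx]
      _ ≤ (x - a) * ∫ s in a..x, (deriv g s) ^ 2 := hcs
      _ ≤ (b - a) * ∫ s in a..x, (deriv g s) ^ 2 :=
          mul_le_mul_of_nonneg_right (by linarith) hxann
      _ ≤ (b - a) * ∫ s in a..b, (deriv g s) ^ 2 :=
          mul_le_mul_of_nonneg_left hmono (by linarith)
  calc ∫ x in a..b, (g x) ^ 2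
      ≤ ∫ x in a..b, ((b - a) * ∫ s in a..b, (deriv g s) ^ 2) := by
        apply intervalIntegral.integral_mono_on hab ((hgc.pow 2).intervalIntegrable a b)
          intervalIntegrable_const key
    _ = (b - a) * ((b - a) * ∫ s in a..b, (deriv g s) ^ 2) := by
        rw [intervalIntegral.integral_const]; simp [smul_eq_mul]
    _ = (b - a) ^ 2 * ∫ x in a..b, (deriv g x) ^ 2 := by ring

lemma pdx_abs_le (u : ℝ → ℝ → ℝ) (hu : ContDiff ℝ (((⊤ : ℕ∞)) : WithTop ℕ∞) (uncurry u)) (M : ℝ)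
    (x s : ℝ) (hb : ‖iteratedFDeriv ℝ 1 (uncurry u) (x, s)‖ ≤ M) :
    |pdx u x s| ≤ M := by
  have hrep : pdx u x s = iteratedFDeriv ℝ 1 (uncurry u) (x, s) ![((1:ℝ), (0:ℝ))] := by
    rw [iteratedFDeriv_one_apply]
    simp only [Matrix.cons_val_zero]
    exact (hasDerivAt_slice_x u (hu.differentiable (by simp)) x s).deriv
  have hop := (iteratedFDeriv ℝ 1 (uncurry u) (x, s)).le_opNorm ![((1:ℝ), (0:ℝ))]
  have hnorm1 : ∀ i : Fin 1, ‖(![((1:ℝ), (0:ℝ))]) i‖ = 1 := by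
    intro i
    fin_cases i
    simp [Prod.norm_def]
  rw [Finset.prod_congr rfl (fun i _ => hnorm1 i)] at hop
  simp only [Finset.prod_const_one, mul_one] at hop
  calc |pdx u x s| = ‖iteratedFDeriv ℝ 1 (uncurry u) (x, s) ![((1:ℝ), (0:ℝ))]‖ := by
        rw [hrep, Real.norm_eq_abs]
    _ ≤ ‖iteratedFDeriv ℝ 1 (uncurry u) (x, s)‖ := hop
    _ ≤ M := hb

lemma ptws_dom (A E w Qa e wb τ : ℝ) (hA : |A| ≤ Qa) (hE : 0 < E) (hEe : E ≤ e)
    (hw : 0 ≤ w) (hwb : w ≤ τ * wb) (hτ : 1 ≤ τ) :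
    |A * E * w| ≤ (τ * (e * wb)) * Qa := by
  have hQa : 0 ≤ Qa := (abs_nonneg A).trans hA
  have he : 0 < e := lt_of_lt_of_le hE hEe
  have hwb0 : 0 ≤ wb := by nlinarith
  calc |A * E * w| = |A| * E * w := by
        rw [abs_mul, abs_mul, abs_of_pos hE, abs_of_nonneg hw]
    _ ≤ Qa * e * w := by
        apply mul_le_mul_of_nonneg_right _ hw
        exact mul_le_mul hA hEe hE.le hQa
    _ ≤ Qa * e * (τ * wb) := mul_le_mul_of_nonneg_left hwb (mul_nonneg hQa he.le)
    _ = (τ * (e * wb)) * Qa := by ring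

lemma int_comb2 (a b c₁ c₂ : ℝ) (f₁ f₂ : ℝ → ℝ) (h₁ : Continuous f₁) (h₂ : Continuous f₂) :
    ∫ x in a..b, (c₁ * f₁ x + c₂ * f₂ x) =
      c₁ * (∫ x in a..b, f₁ x) + c₂ * (∫ x in a..b, f₂ x) := by
  rw [intervalIntegral.integral_add ((by fun_prop : Continuous fun x => c₁ * f₁ x).intervalIntegrable a b)
    ((by fun_prop : Continuous fun x => c₂ * f₂ x).intervalIntegrable a b),
    intervalIntegral.integral_const_mul, intervalIntegral.integral_const_mul]

lemma int_comb4 (a b c₁ c₂ c₃ c₄ : ℝ) (f₁ f₂ f₃ f₄ : ℝ → ℝ)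
    (h₁ : Continuous f₁) (h₂ : Continuous f₂) (h₃ : Continuous f₃) (h₄ : Continuous f₄) :
    ∫ x in a..b, (c₁ * f₁ x + c₂ * f₂ x + c₃ * f₃ x + c₄ * f₄ x) =
      c₁ * (∫ x in a..b, f₁ x) + c₂ * (∫ x in a..b, f₂ x)
        + c₃ * (∫ x in a..b, f₃ x) + c₄ * (∫ x in a..b, f₄ x) := by
  have e1 : (fun x => c₁ * f₁ x + c₂ * f₂ x + c₃ * f₃ x + c₄ * f₄ x) =
      fun x => 1 * (c₁ * f₁ x + c₂ * f₂ x) + 1 * (c₃ * f₃ x + c₄ * f₄ x) := by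
    funext x; ring
  rw [e1, int_comb2 a b 1 1 _ _ (by fun_prop : Continuous fun x => c₁ * f₁ x + c₂ * f₂ x)
    (by fun_prop : Continuous fun x => c₃ * f₃ x + c₄ * f₄ x),
    int_comb2 a b c₁ c₂ f₁ f₂ h₁ h₂, int_comb2 a b c₃ c₄ f₃ f₄ h₃ h₄]
  ring

lemma abs_comb (a b c d μ β k : ℝ) (hμ : 0 < μ) (hβ : 0 < β) (hk : 0 < k) :
    |a + μ * b + β * c + k * d| ≤ |a| + μ * |b| + β * |c| + k * |d| := by
  have t1 := abs_add_le (a + μ * b + β * c) (k * d)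
  have t2 := abs_add_le (a + μ * b) (β * c)
  have t3 := abs_add_le a (μ * b)
  have m2 : |μ * b| = μ * |b| := by rw [abs_mul, abs_of_pos hμ]
  have m3 : |β * c| = β * |c| := by rw [abs_mul, abs_of_pos hβ]
  have m4 : |k * d| = k * |d| := by rw [abs_mul, abs_of_pos hk]
  linarith

end AuxLemmas

set_option maxHeartbeats 1000000 in
open Function in
lemma Hd_abs_bound (L₀ L β₂ μ₂ lam₂ ρ₂ T h M : ℝ)
    (hL : L₀ < L) (hβ₂ : 0 < β₂) (hμ₂ : 0 < μ₂) (hlam₂ : 0 < lam₂) (hρ₂ : 0 < ρ₂)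
    (hT : 0 < T) (hh : 0 < h) (hM : 0 < M)
    (u v : ℝ → ℝ → ℝ)
    (hu : ContDiff ℝ (((⊤ : ℕ∞)) : WithTop ℕ∞) (uncurry u)) (hv : ContDiff ℝ (((⊤ : ℕ∞)) : WithTop ℕ∞) (uncurry v))
    (hMu : MBounded M L₀ L (T + h) u)
    (t : ℝ) (ht : t = 0 ∨ t = T)
    (hbc0 : tdiff h u L₀ t = 0) (hbc1 : pdx (tdiff h u) L₀ t = 0)
    (τ : ℝ) (hτ : 1 ≤ τ) :
    |Hd β₂ μ₂ ρ₂ L₀ L T h τ u v t| ≤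
      (((L - L₀) * (β₂ + ρ₂) + μ₂ * (L - L₀) + β₂ * (T ^ 2 * (L - L₀) + 1)
          + μ₂ * T ^ 2 * (T ^ 2 * (L - L₀) + 2))
        * ((2 / β₂ + 2 / μ₂ + 2 / lam₂ + 2 / ρ₂ + 2)
          * (3 + (L - L₀) ^ 2 + (L - L₀) ^ 4 + 2 * M ^ 2 * (L - L₀) ^ 2)))
        * Ed β₂ μ₂ lam₂ ρ₂ L₀ L h u v t * τ ^ 2
        * Real.exp (-τ * ((L - L₀) * T ^ 2 / 4)) := by
  have hLL : L₀ ≤ L := hL.le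
  have hB : (0:ℝ) < L - L₀ := by linarith only [hL]
  have hτ0 : (0:ℝ) < τ := by linarith only [hτ]
  have hττ2 : τ ≤ τ ^ 2 := by nlinarith only [hτ]
  set Eex := Real.exp (-τ * ((L - L₀) * T ^ 2 / 4)) with hEex
  have hEexpos : 0 < Eex := by rw [hEex]; exact Real.exp_pos _
  set En := Ed β₂ μ₂ lam₂ ρ₂ L₀ L h u v t with hEn
  set R := 2 / β₂ + 2 / μ₂ + 2 / lam₂ + 2 / ρ₂ + 2 with hR
  set K := 3 + (L - L₀) ^ 2 + (L - L₀) ^ 4 + 2 * M ^ 2 * (L - L₀) ^ 2 with hK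
  -- R and K facts
  have hd1 : (0:ℝ) < 2 / β₂ := div_pos two_pos hβ₂
  have hd2 : (0:ℝ) < 2 / μ₂ := div_pos two_pos hμ₂
  have hd3 : (0:ℝ) < 2 / lam₂ := div_pos two_pos hlam₂
  have hd4 : (0:ℝ) < 2 / ρ₂ := div_pos two_pos hρ₂
  have hRpos : 0 < R := by rw [hR]; linarith only [hd1, hd2, hd3, hd4]
  have hRβ : 2 / β₂ ≤ R := by rw [hR]; linarith only [hd2, hd3, hd4]
  have hRμ : 2 / μ₂ ≤ R := by rw [hR]; linarith only [hd1, hd3, hd4]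
  have hRlam : 2 / lam₂ ≤ R := by rw [hR]; linarith only [hd1, hd2, hd4]
  have hRρ : 2 / ρ₂ ≤ R := by rw [hR]; linarith only [hd1, hd2, hd3]
  have hR2 : (2:ℝ) ≤ R := by rw [hR]; linarith only [hd1, hd2, hd3, hd4]
  have hKsq : 0 ≤ 2 * M ^ 2 * (L - L₀) ^ 2 := by positivity
  have hK3 : (3:ℝ) ≤ K := by
    rw [hK]; linarith only [sq_nonneg (L - L₀), sq_nonneg ((L - L₀) ^ 2), hKsq]
  have hKpos : 0 < K := by linarith only [hK3]
  have hKB2 : (L - L₀) ^ 2 ≤ K := by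
    rw [hK]; linarith only [sq_nonneg ((L - L₀) ^ 2), hKsq]
  have hKB4 : (L - L₀) ^ 4 ≤ K := by
    rw [hK]; linarith only [sq_nonneg (L - L₀), hKsq]
  have hK32 : 3 + 2 * M ^ 2 * (L - L₀) ^ 2 ≤ K := by
    rw [hK]; linarith only [sq_nonneg (L - L₀), sq_nonneg ((L - L₀) ^ 2)]
  -- smoothness of the difference quotients
  have hud := smooth_tdiff h u hu
  have hvd := smooth_tdiff h v hv
  -- continuity of all slices
  have hc0 : Continuous (fun x => tdiff h u x t) := cont_slice _ hud t
  have hc1 : Continuous (fun x => pdt (tdiff h u) x t) := cont_slice _ (smooth_pdt _ hud) t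
  have hc2 : Continuous (fun x => pdx (tdiff h u) x t) := cont_slice _ (smooth_pdx _ hud) t
  have hc3 : Continuous (fun x => pdx (pdt (tdiff h u)) x t) :=
    cont_slice _ (smooth_pdx _ (smooth_pdt _ hud)) t
  have hc4 : Continuous (fun x => pdx (pdx (tdiff h u)) x t) :=
    cont_slice _ (smooth_pdx _ (smooth_pdx _ hud)) t
  have hc5 : Continuous (fun x => pdt (tdiff h v) x t) := cont_slice _ (smooth_pdt _ hvd) t
  have hc6 : Continuous (fun x => pdx (tdiff h v) x t) := cont_slice _ (smooth_pdx _ hvd) t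
  have hca : Continuous (fun x => pdx u x (t + h) + pdx u x t) :=
    (cont_slice _ (smooth_pdx _ hu) (t + h)).add (cont_slice _ (smooth_pdx _ hu) t)
  have hcw : Continuous (fun x => pdx (tdiff h v) x t
      + 1 / 2 * pdx (tdiff h u) x t * (pdx u x (t + h) + pdx u x t)) :=
    hc6.add ((continuous_const.mul hc2).mul hca)
  have hcexp : Continuous (fun x => Real.exp (τ * phiW L₀ L T x t)) := by
    apply Real.continuous_exp.comp
    apply continuous_const.mul
    unfold phiW
    fun_prop
  -- nonnegativity of the basic integrals
  have hS1n : 0 ≤ ∫ x in L₀..L, (pdt (tdiff h u) x t) ^ 2 :=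
    intervalIntegral.integral_nonneg hLL fun x _ => sq_nonneg _
  have hS3n : 0 ≤ ∫ x in L₀..L, (pdx (pdt (tdiff h u)) x t) ^ 2 :=
    intervalIntegral.integral_nonneg hLL fun x _ => sq_nonneg _
  have hS4n : 0 ≤ ∫ x in L₀..L, (pdx (pdx (tdiff h u)) x t) ^ 2 :=
    intervalIntegral.integral_nonneg hLL fun x _ => sq_nonneg _
  have hSwn : 0 ≤ ∫ x in L₀..L, (pdx (tdiff h v) x t
      + 1 / 2 * pdx (tdiff h u) x t * (pdx u x (t + h) + pdx u x t)) ^ 2 :=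
    intervalIntegral.integral_nonneg hLL fun x _ => sq_nonneg _
  have hS5n : 0 ≤ ∫ x in L₀..L, (pdt (tdiff h v) x t) ^ 2 :=
    intervalIntegral.integral_nonneg hLL fun x _ => sq_nonneg _
  have n1 := mul_nonneg hβ₂.le hS1n
  have n2 := mul_nonneg hμ₂.le hS3n
  have n3 := mul_nonneg hlam₂.le hS4n
  have n4 := mul_nonneg hρ₂.le hS5n
  -- energy identity
  have hEd_eq : En = 1 / 2 * (β₂ * (∫ x in L₀..L, (pdt (tdiff h u) x t) ^ 2)
      + μ₂ * (∫ x in L₀..L, (pdx (pdt (tdiff h u)) x t) ^ 2)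
      + lam₂ * (∫ x in L₀..L, (pdx (pdx (tdiff h u)) x t) ^ 2)
      + (∫ x in L₀..L, (pdx (tdiff h v) x t
          + 1 / 2 * pdx (tdiff h u) x t * (pdx u x (t + h) + pdx u x t)) ^ 2)
      + ρ₂ * (∫ x in L₀..L, (pdt (tdiff h v) x t) ^ 2)) := hEn.trans rfl
  have hEnn : 0 ≤ En := by linarith only [hEd_eq, n1, n2, n3, n4, hSwn]
  -- basic energy bounds
  have hS1b : (∫ x in L₀..L, (pdt (tdiff h u) x t) ^ 2) ≤ 2 / β₂ * En := by
    rw [div_mul_eq_mul_div, le_div_iff₀ hβ₂]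
    linarith only [hEd_eq, n2, n3, n4, hSwn]
  have hS3b : (∫ x in L₀..L, (pdx (pdt (tdiff h u)) x t) ^ 2) ≤ 2 / μ₂ * En := by
    rw [div_mul_eq_mul_div, le_div_iff₀ hμ₂]
    linarith only [hEd_eq, n1, n3, n4, hSwn]
  have hS4b : (∫ x in L₀..L, (pdx (pdx (tdiff h u)) x t) ^ 2) ≤ 2 / lam₂ * En := by
    rw [div_mul_eq_mul_div, le_div_iff₀ hlam₂]
    linarith only [hEd_eq, n1, n2, n4, hSwn]
  have hS5b : (∫ x in L₀..L, (pdt (tdiff h v) x t) ^ 2) ≤ 2 / ρ₂ * En := by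
    rw [div_mul_eq_mul_div, le_div_iff₀ hρ₂]
    linarith only [hEd_eq, n1, n2, n3, hSwn]
  have hSwb : (∫ x in L₀..L, (pdx (tdiff h v) x t
      + 1 / 2 * pdx (tdiff h u) x t * (pdx u x (t + h) + pdx u x t)) ^ 2) ≤ 2 * En := by
    linarith only [hEd_eq, n1, n2, n3, n4]
  -- Poincaré inequalities
  have hP2 : (∫ x in L₀..L, (pdx (tdiff h u) x t) ^ 2) ≤
      (L - L₀) ^ 2 * ∫ x in L₀..L, (pdx (pdx (tdiff h u)) x t) ^ 2 :=
    poincare L₀ L hLL (fun x => pdx (tdiff h u) x t)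
      (diff_slice _ (smooth_pdx _ hud) t) hc4 hbc1
  have hP0 : (∫ x in L₀..L, (tdiff h u x t) ^ 2) ≤
      (L - L₀) ^ 2 * ∫ x in L₀..L, (pdx (tdiff h u) x t) ^ 2 :=
    poincare L₀ L hLL (fun x => tdiff h u x t) (diff_slice _ hud t) hc2 hbc0
  have hS2mid : (∫ x in L₀..L, (pdx (tdiff h u) x t) ^ 2) ≤
      2 / lam₂ * ((L - L₀) ^ 2 * En) := by
    have hm := mul_le_mul_of_nonneg_left hS4b (sq_nonneg (L - L₀))
    calc (∫ x in L₀..L, (pdx (tdiff h u) x t) ^ 2)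
        ≤ (L - L₀) ^ 2 * ∫ x in L₀..L, (pdx (pdx (tdiff h u)) x t) ^ 2 := hP2
      _ ≤ (L - L₀) ^ 2 * (2 / lam₂ * En) := hm
      _ = 2 / lam₂ * ((L - L₀) ^ 2 * En) := by ring
  have hS0mid : (∫ x in L₀..L, (tdiff h u x t) ^ 2) ≤
      2 / lam₂ * ((L - L₀) ^ 4 * En) := by
    have hm := mul_le_mul_of_nonneg_left hS2mid (sq_nonneg (L - L₀))
    calc (∫ x in L₀..L, (tdiff h u x t) ^ 2)
        ≤ (L - L₀) ^ 2 * ∫ x in L₀..L, (pdx (tdiff h u) x t) ^ 2 := hP0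
      _ ≤ (L - L₀) ^ 2 * (2 / lam₂ * ((L - L₀) ^ 2 * En)) := hm
      _ = 2 / lam₂ * ((L - L₀) ^ 4 * En) := by ring
  -- membership of the relevant times
  have htmem : t ∈ Set.Icc (0:ℝ) (T + h) ∧ t + h ∈ Set.Icc (0:ℝ) (T + h) := by
    rcases ht with rfl | rfl
    · exact ⟨⟨le_refl 0, by linarith only [hT, hh]⟩,
        ⟨by linarith only [hh], by linarith only [hT]⟩⟩
    · exact ⟨⟨hT.le, by linarith only [hh]⟩,
        ⟨by linarith only [hT, hh], le_refl _⟩⟩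
  -- bound on the integral of (v_d)_x ^ 2
  have hS6a : (∫ x in L₀..L, (pdx (tdiff h v) x t) ^ 2) ≤
      2 * (∫ x in L₀..L, (pdx (tdiff h v) x t
        + 1 / 2 * pdx (tdiff h u) x t * (pdx u x (t + h) + pdx u x t)) ^ 2)
      + 2 * M ^ 2 * (∫ x in L₀..L, (pdx (tdiff h u) x t) ^ 2) := by
    have hpt : ∀ x ∈ Set.Icc L₀ L, (pdx (tdiff h v) x t) ^ 2 ≤
        2 * (pdx (tdiff h v) x t
          + 1 / 2 * pdx (tdiff h u) x t * (pdx u x (t + h) + pdx u x t)) ^ 2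
        + 2 * M ^ 2 * (pdx (tdiff h u) x t) ^ 2 := by
      intro x hx
      have h1 := pdx_abs_le u hu M x (t + h) (hMu 1 (by norm_num) x hx (t + h) htmem.2)
      have h2 := pdx_abs_le u hu M x t (hMu 1 (by norm_num) x hx t htmem.1)
      have ha : |pdx u x (t + h) + pdx u x t| ≤ 2 * M :=
        (abs_add_le _ _).trans (by linarith only [h1, h2])
      have ha' := abs_le.mp ha
      have ha2 : (pdx u x (t + h) + pdx u x t) ^ 2 ≤ (2 * M) ^ 2 := by
        nlinarith only [ha'.1, ha'.2]
      nlinarith only [sq_nonneg (pdx (tdiff h v) x t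
          + pdx (tdiff h u) x t * (pdx u x (t + h) + pdx u x t)),
        mul_nonneg (sq_nonneg (pdx (tdiff h u) x t)) (sub_nonneg.mpr ha2)]
    calc (∫ x in L₀..L, (pdx (tdiff h v) x t) ^ 2)
        ≤ ∫ x in L₀..L, (2 * (pdx (tdiff h v) x t
            + 1 / 2 * pdx (tdiff h u) x t * (pdx u x (t + h) + pdx u x t)) ^ 2
          + 2 * M ^ 2 * (pdx (tdiff h u) x t) ^ 2) :=
          intervalIntegral.integral_mono_on hLL ((hc6.pow 2).intervalIntegrable L₀ L)
            (((continuous_const.mul (hcw.pow 2)).add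
              (continuous_const.mul (hc2.pow 2))).intervalIntegrable L₀ L) hpt
      _ = 2 * (∫ x in L₀..L, (pdx (tdiff h v) x t
            + 1 / 2 * pdx (tdiff h u) x t * (pdx u x (t + h) + pdx u x t)) ^ 2)
          + 2 * M ^ 2 * (∫ x in L₀..L, (pdx (tdiff h u) x t) ^ 2) :=
          int_comb2 L₀ L 2 (2 * M ^ 2) _ _ (hcw.pow 2) (hc2.pow 2)
  -- master bounds S_i ≤ R*K*En
  have hKEn : En ≤ K * En := le_mul_of_one_le_left hEnn (by linarith only [hK3])
  have master : ∀ S c : ℝ, S ≤ c * En → c ≤ R → S ≤ R * K * En := by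
    intro S c hSc hcR
    calc S ≤ c * En := hSc
      _ ≤ R * En := mul_le_mul_of_nonneg_right hcR hEnn
      _ ≤ R * (K * En) := mul_le_mul_of_nonneg_left hKEn hRpos.le
      _ = R * K * En := by ring
  have hS1G : (∫ x in L₀..L, (pdt (tdiff h u) x t) ^ 2) ≤ R * K * En :=
    master _ _ hS1b hRβ
  have hS3G : (∫ x in L₀..L, (pdx (pdt (tdiff h u)) x t) ^ 2) ≤ R * K * En :=
    master _ _ hS3b hRμ
  have hS4G : (∫ x in L₀..L, (pdx (pdx (tdiff h u)) x t) ^ 2) ≤ R * K * En :=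
    master _ _ hS4b hRlam
  have hS5G : (∫ x in L₀..L, (pdt (tdiff h v) x t) ^ 2) ≤ R * K * En :=
    master _ _ hS5b hRρ
  have hS2G : (∫ x in L₀..L, (pdx (tdiff h u) x t) ^ 2) ≤ R * K * En := by
    calc (∫ x in L₀..L, (pdx (tdiff h u) x t) ^ 2)
        ≤ 2 / lam₂ * ((L - L₀) ^ 2 * En) := hS2mid
      _ ≤ R * (K * En) :=
          mul_le_mul hRlam (mul_le_mul_of_nonneg_right hKB2 hEnn)
            (mul_nonneg (sq_nonneg _) hEnn) hRpos.le
      _ = R * K * En := by ring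
  have hS0G : (∫ x in L₀..L, (tdiff h u x t) ^ 2) ≤ R * K * En := by
    calc (∫ x in L₀..L, (tdiff h u x t) ^ 2)
        ≤ 2 / lam₂ * ((L - L₀) ^ 4 * En) := hS0mid
      _ ≤ R * (K * En) :=
          mul_le_mul hRlam (mul_le_mul_of_nonneg_right hKB4 hEnn)
            (mul_nonneg (by positivity) hEnn) hRpos.le
      _ = R * K * En := by ring
  have hS6G : (∫ x in L₀..L, (pdx (tdiff h v) x t) ^ 2) ≤ R * K * En := by
    have h6b : 2 * M ^ 2 * (∫ x in L₀..L, (pdx (tdiff h u) x t) ^ 2) ≤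
        2 * M ^ 2 * (2 / lam₂ * ((L - L₀) ^ 2 * En)) :=
      mul_le_mul_of_nonneg_left hS2mid (by positivity)
    have hRKsplit : R * (3 + 2 * M ^ 2 * (L - L₀) ^ 2) * En ≤ R * K * En :=
      mul_le_mul_of_nonneg_right (mul_le_mul_of_nonneg_left hK32 hRpos.le) hEnn
    have hEq1 : 2 * M ^ 2 * (2 / lam₂ * ((L - L₀) ^ 2 * En)) =
        2 / lam₂ * (2 * M ^ 2 * (L - L₀) ^ 2) * En := by ring
    have h7 : 2 / lam₂ * (2 * M ^ 2 * (L - L₀) ^ 2) * En ≤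
        R * (2 * M ^ 2 * (L - L₀) ^ 2) * En :=
      mul_le_mul_of_nonneg_right (mul_le_mul_of_nonneg_right hRlam hKsq) hEnn
    have h8' : 0 ≤ (3 * R - 4) * En :=
      mul_nonneg (by linarith only [hR2] : (0:ℝ) ≤ 3 * R - 4) hEnn
    have hA0 : 2 * M ^ 2 * (∫ x in L₀..L, (pdx (tdiff h u) x t) ^ 2) ≤
        R * (2 * M ^ 2 * (L - L₀) ^ 2) * En := by
      exact (h6b.trans_eq hEq1).trans h7
    have hA1 : (∫ x in L₀..L, (pdx (tdiff h v) x t) ^ 2) ≤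
        4 * En + R * (2 * M ^ 2 * (L - L₀) ^ 2) * En := by
      linarith only [hS6a, hSwb, hA0]
    linarith only [hA1, hRKsplit, h8']
  -- the exponential weight bound
  have hphi : ∀ x ∈ Set.Icc L₀ L, Real.exp (τ * phiW L₀ L T x t) ≤ Eex := by
    intro x hx
    rw [hEex]
    apply Real.exp_le_exp.mpr
    have h52 : (t - T / 2) ^ 2 = T ^ 2 / 4 := by rcases ht with rfl | rfl <;> ring
    show τ * ((L - x) * T ^ 2 - 5 * (L - L₀) * (t - T / 2) ^ 2) ≤ _
    rw [h52]
    nlinarith only [mul_nonneg (mul_nonneg hτ0.le (sq_nonneg T))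
      (by linarith only [hx.1] : (0:ℝ) ≤ x - L₀)]
  -- continuity of the four integrands
  have hf1c : Continuous (fun x => (β₂ * pdt (tdiff h u) x t * pdx (tdiff h u) x t
      + ρ₂ * pdt (tdiff h v) x t * pdx (tdiff h v) x t)
      * Real.exp (τ * phiW L₀ L T x t) * (L - x)) :=
    ((((continuous_const.mul hc1).mul hc2).add
      ((continuous_const.mul hc5).mul hc6)).mul hcexp).mul
      (continuous_const.sub continuous_id)
  have hf2c : Continuous (fun x => pdx (pdt (tdiff h u)) x t * pdx (pdx (tdiff h u)) x t
      * Real.exp (τ * phiW L₀ L T x t) * (L - x)) :=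
    (((hc3.mul hc4)).mul hcexp).mul (continuous_const.sub continuous_id)
  have hf3c : Continuous (fun x => (pdt (tdiff h u) x t) ^ 2
      * Real.exp (τ * phiW L₀ L T x t) * (τ * T ^ 2 * (L - x) + 1)) :=
    ((hc1.pow 2).mul hcexp).mul
      ((continuous_const.mul (continuous_const.sub continuous_id)).add continuous_const)
  have hf4c : Continuous (fun x => pdx (pdt (tdiff h u)) x t * tdiff h u x t
      * Real.exp (τ * phiW L₀ L T x t) * (τ * T ^ 2 * (L - x) + 2)) :=
    ((hc3.mul hc0).mul hcexp).mul
      ((continuous_const.mul (continuous_const.sub continuous_id)).add continuous_const)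
  -- bound for the first integral
  have habs1 : |∫ x in L₀..L, ((β₂ * pdt (tdiff h u) x t * pdx (tdiff h u) x t
      + ρ₂ * pdt (tdiff h v) x t * pdx (tdiff h v) x t)
      * Real.exp (τ * phiW L₀ L T x t) * (L - x))| ≤
      (τ * (Eex * (L - L₀))) * ((β₂ / 2) * (∫ x in L₀..L, (pdt (tdiff h u) x t) ^ 2)
        + (β₂ / 2) * (∫ x in L₀..L, (pdx (tdiff h u) x t) ^ 2)
        + (ρ₂ / 2) * (∫ x in L₀..L, (pdt (tdiff h v) x t) ^ 2)
        + (ρ₂ / 2) * (∫ x in L₀..L, (pdx (tdiff h v) x t) ^ 2)) := by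
    have hdomc : Continuous (fun x => (τ * (Eex * (L - L₀)))
        * ((β₂ / 2) * (pdt (tdiff h u) x t) ^ 2 + (β₂ / 2) * (pdx (tdiff h u) x t) ^ 2
          + (ρ₂ / 2) * (pdt (tdiff h v) x t) ^ 2 + (ρ₂ / 2) * (pdx (tdiff h v) x t) ^ 2)) :=
      continuous_const.mul ((((continuous_const.mul (hc1.pow 2)).add
        (continuous_const.mul (hc2.pow 2))).add
        (continuous_const.mul (hc5.pow 2))).add (continuous_const.mul (hc6.pow 2)))
    refine (intervalIntegral.abs_integral_le_integral_abs hLL).trans ?_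
    refine (intervalIntegral.integral_mono_on hLL (hf1c.abs.intervalIntegrable _ _)
      (hdomc.intervalIntegrable _ _) ?_).trans_eq ?_
    · intro x hx
      refine ptws_dom _ _ _ _ _ _ _ ?_ (Real.exp_pos _) (hphi x hx)
        (by linarith only [hx.2]) ?_ hτ
      · have k1 : |β₂ * (pdt (tdiff h u) x t * pdx (tdiff h u) x t)| ≤
            β₂ * (((pdt (tdiff h u) x t) ^ 2 + (pdx (tdiff h u) x t) ^ 2) / 2) := by
          rw [abs_mul, abs_of_pos hβ₂]
          exact mul_le_mul_of_nonneg_left (abs_mul_le_half_sq _ _) hβ₂.le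
        have k2 : |ρ₂ * (pdt (tdiff h v) x t * pdx (tdiff h v) x t)| ≤
            ρ₂ * (((pdt (tdiff h v) x t) ^ 2 + (pdx (tdiff h v) x t) ^ 2) / 2) := by
          rw [abs_mul, abs_of_pos hρ₂]
          exact mul_le_mul_of_nonneg_left (abs_mul_le_half_sq _ _) hρ₂.le
        refine (abs_add_le _ _).trans ?_
        rw [mul_assoc β₂, mul_assoc ρ₂]
        linarith only [k1, k2]
      · nlinarith only [mul_nonneg (by linarith only [hτ] : (0:ℝ) ≤ τ - 1) hB.le,
          hx.1, hx.2]
    · rw [intervalIntegral.integral_const_mul]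
      congr 1
      exact int_comb4 L₀ L (β₂ / 2) (β₂ / 2) (ρ₂ / 2) (ρ₂ / 2)
        (fun x => (pdt (tdiff h u) x t) ^ 2) (fun x => (pdx (tdiff h u) x t) ^ 2)
        (fun x => (pdt (tdiff h v) x t) ^ 2) (fun x => (pdx (tdiff h v) x t) ^ 2)
        (hc1.pow 2) (hc2.pow 2) (hc5.pow 2) (hc6.pow 2)
  -- bound for the second integral
  have habs2 : |∫ x in L₀..L, (pdx (pdt (tdiff h u)) x t * pdx (pdx (tdiff h u)) x t
      * Real.exp (τ * phiW L₀ L T x t) * (L - x))| ≤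
      (τ * (Eex * (L - L₀))) * ((1 / 2) * (∫ x in L₀..L, (pdx (pdt (tdiff h u)) x t) ^ 2)
        + (1 / 2) * (∫ x in L₀..L, (pdx (pdx (tdiff h u)) x t) ^ 2)) := by
    have hdomc : Continuous (fun x => (τ * (Eex * (L - L₀)))
        * ((1 / 2) * (pdx (pdt (tdiff h u)) x t) ^ 2
          + (1 / 2) * (pdx (pdx (tdiff h u)) x t) ^ 2)) :=
      continuous_const.mul ((continuous_const.mul (hc3.pow 2)).add
        (continuous_const.mul (hc4.pow 2)))
    refine (intervalIntegral.abs_integral_le_integral_abs hLL).trans ?_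
    refine (intervalIntegral.integral_mono_on hLL (hf2c.abs.intervalIntegrable _ _)
      (hdomc.intervalIntegrable _ _) ?_).trans_eq ?_
    · intro x hx
      refine ptws_dom _ _ _ _ _ _ _ ?_ (Real.exp_pos _) (hphi x hx)
        (by linarith only [hx.2]) ?_ hτ
      · exact (abs_mul_le_half_sq _ _).trans_eq (by ring)
      · nlinarith only [mul_nonneg (by linarith only [hτ] : (0:ℝ) ≤ τ - 1) hB.le,
          hx.1, hx.2]
    · rw [intervalIntegral.integral_const_mul]
      congr 1
      exact int_comb2 L₀ L (1 / 2) (1 / 2)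
        (fun x => (pdx (pdt (tdiff h u)) x t) ^ 2)
        (fun x => (pdx (pdx (tdiff h u)) x t) ^ 2) (hc3.pow 2) (hc4.pow 2)
  -- bound for the third integral
  have habs3 : |∫ x in L₀..L, ((pdt (tdiff h u) x t) ^ 2
      * Real.exp (τ * phiW L₀ L T x t) * (τ * T ^ 2 * (L - x) + 1))| ≤
      (τ * (Eex * (T ^ 2 * (L - L₀) + 1)))
        * (∫ x in L₀..L, (pdt (tdiff h u) x t) ^ 2) := by
    have hdomc : Continuous (fun x => (τ * (Eex * (T ^ 2 * (L - L₀) + 1)))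
        * (pdt (tdiff h u) x t) ^ 2) := continuous_const.mul (hc1.pow 2)
    refine (intervalIntegral.abs_integral_le_integral_abs hLL).trans ?_
    refine (intervalIntegral.integral_mono_on hLL (hf3c.abs.intervalIntegrable _ _)
      (hdomc.intervalIntegrable _ _) ?_).trans_eq ?_
    · intro x hx
      refine ptws_dom _ _ _ _ _ _ _ (le_of_eq (abs_of_nonneg (sq_nonneg _)))
        (Real.exp_pos _) (hphi x hx) ?_ ?_ hτ
      · have := mul_nonneg (mul_nonneg hτ0.le (sq_nonneg T))
          (by linarith only [hx.2] : (0:ℝ) ≤ L - x)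
        nlinarith only [this]
      · nlinarith only [mul_le_mul_of_nonneg_left
          (by linarith only [hx.1] : L - x ≤ L - L₀)
          (mul_nonneg hτ0.le (sq_nonneg T)), hτ]
    · exact intervalIntegral.integral_const_mul _ _
  -- bound for the fourth integral
  have habs4 : |∫ x in L₀..L, (pdx (pdt (tdiff h u)) x t * tdiff h u x t
      * Real.exp (τ * phiW L₀ L T x t) * (τ * T ^ 2 * (L - x) + 2))| ≤
      (τ * (Eex * (T ^ 2 * (L - L₀) + 2)))
        * ((1 / 2) * (∫ x in L₀..L, (pdx (pdt (tdiff h u)) x t) ^ 2)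
          + (1 / 2) * (∫ x in L₀..L, (tdiff h u x t) ^ 2)) := by
    have hdomc : Continuous (fun x => (τ * (Eex * (T ^ 2 * (L - L₀) + 2)))
        * ((1 / 2) * (pdx (pdt (tdiff h u)) x t) ^ 2 + (1 / 2) * (tdiff h u x t) ^ 2)) :=
      continuous_const.mul ((continuous_const.mul (hc3.pow 2)).add
        (continuous_const.mul (hc0.pow 2)))
    refine (intervalIntegral.abs_integral_le_integral_abs hLL).trans ?_
    refine (intervalIntegral.integral_mono_on hLL (hf4c.abs.intervalIntegrable _ _)
      (hdomc.intervalIntegrable _ _) ?_).trans_eq ?_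
    · intro x hx
      refine ptws_dom _ _ _ _ _ _ _ ?_ (Real.exp_pos _) (hphi x hx) ?_ ?_ hτ
      · exact (abs_mul_le_half_sq _ _).trans_eq (by ring)
      · have := mul_nonneg (mul_nonneg hτ0.le (sq_nonneg T))
          (by linarith only [hx.2] : (0:ℝ) ≤ L - x)
        nlinarith only [this]
      · nlinarith only [mul_le_mul_of_nonneg_left
          (by linarith only [hx.1] : L - x ≤ L - L₀)
          (mul_nonneg hτ0.le (sq_nonneg T)), hτ]
    · rw [intervalIntegral.integral_const_mul]
      congr 1
      exact int_comb2 L₀ L (1 / 2) (1 / 2)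
        (fun x => (pdx (pdt (tdiff h u)) x t) ^ 2)
        (fun x => (tdiff h u x t) ^ 2) (hc3.pow 2) (hc0.pow 2)
  -- decompose Hd
  have e : Hd β₂ μ₂ ρ₂ L₀ L T h τ u v t =
      (∫ x in L₀..L, ((β₂ * pdt (tdiff h u) x t * pdx (tdiff h u) x t
        + ρ₂ * pdt (tdiff h v) x t * pdx (tdiff h v) x t)
        * Real.exp (τ * phiW L₀ L T x t) * (L - x)))
      + μ₂ * (∫ x in L₀..L, (pdx (pdt (tdiff h u)) x t * pdx (pdx (tdiff h u)) x t
        * Real.exp (τ * phiW L₀ L T x t) * (L - x)))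
      + β₂ * (∫ x in L₀..L, ((pdt (tdiff h u) x t) ^ 2
        * Real.exp (τ * phiW L₀ L T x t) * (τ * T ^ 2 * (L - x) + 1)))
      + μ₂ * τ * T ^ 2 * (∫ x in L₀..L, (pdx (pdt (tdiff h u)) x t * tdiff h u x t
        * Real.exp (τ * phiW L₀ L T x t) * (τ * T ^ 2 * (L - x) + 2))) := rfl
  have kpos : 0 < μ₂ * τ * T ^ 2 := mul_pos (mul_pos hμ₂ hτ0) (pow_pos hT 2)
  have htot : |Hd β₂ μ₂ ρ₂ L₀ L T h τ u v t| ≤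
      |∫ x in L₀..L, ((β₂ * pdt (tdiff h u) x t * pdx (tdiff h u) x t
        + ρ₂ * pdt (tdiff h v) x t * pdx (tdiff h v) x t)
        * Real.exp (τ * phiW L₀ L T x t) * (L - x))|
      + μ₂ * |∫ x in L₀..L, (pdx (pdt (tdiff h u)) x t * pdx (pdx (tdiff h u)) x t
        * Real.exp (τ * phiW L₀ L T x t) * (L - x))|
      + β₂ * |∫ x in L₀..L, ((pdt (tdiff h u) x t) ^ 2
        * Real.exp (τ * phiW L₀ L T x t) * (τ * T ^ 2 * (L - x) + 1))|
      + μ₂ * τ * T ^ 2 * |∫ x in L₀..L, (pdx (pdt (tdiff h u)) x t * tdiff h u x t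
        * Real.exp (τ * phiW L₀ L T x t) * (τ * T ^ 2 * (L - x) + 2))| := by
    rw [e]
    exact abs_comb _ _ _ _ μ₂ β₂ (μ₂ * τ * T ^ 2) hμ₂ hβ₂ kpos
  -- combine with the master bounds
  have hRKE : 0 ≤ R * K * En := mul_nonneg (mul_nonneg hRpos.le hKpos.le) hEnn
  have hQ1 : (β₂ / 2) * (∫ x in L₀..L, (pdt (tdiff h u) x t) ^ 2)
      + (β₂ / 2) * (∫ x in L₀..L, (pdx (tdiff h u) x t) ^ 2)
      + (ρ₂ / 2) * (∫ x in L₀..L, (pdt (tdiff h v) x t) ^ 2)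
      + (ρ₂ / 2) * (∫ x in L₀..L, (pdx (tdiff h v) x t) ^ 2) ≤
      (β₂ + ρ₂) * (R * K * En) := by
    have p1 := mul_le_mul_of_nonneg_left hS1G (by linarith only [hβ₂] : (0:ℝ) ≤ β₂ / 2)
    have p2 := mul_le_mul_of_nonneg_left hS2G (by linarith only [hβ₂] : (0:ℝ) ≤ β₂ / 2)
    have p5 := mul_le_mul_of_nonneg_left hS5G (by linarith only [hρ₂] : (0:ℝ) ≤ ρ₂ / 2)
    have p6 := mul_le_mul_of_nonneg_left hS6G (by linarith only [hρ₂] : (0:ℝ) ≤ ρ₂ / 2)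
    linarith only [p1, p2, p5, p6]
  have hQ2 : (1 / 2) * (∫ x in L₀..L, (pdx (pdt (tdiff h u)) x t) ^ 2)
      + (1 / 2) * (∫ x in L₀..L, (pdx (pdx (tdiff h u)) x t) ^ 2) ≤ R * K * En := by
    calc (1 / 2) * (∫ x in L₀..L, (pdx (pdt (tdiff h u)) x t) ^ 2)
        + (1 / 2) * (∫ x in L₀..L, (pdx (pdx (tdiff h u)) x t) ^ 2)
        ≤ (1 / 2) * (R * K * En) + (1 / 2) * (R * K * En) :=
          add_le_add (mul_le_mul_of_nonneg_left hS3G (by norm_num))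
            (mul_le_mul_of_nonneg_left hS4G (by norm_num))
      _ = R * K * En := by ring
  have hQ4 : (1 / 2) * (∫ x in L₀..L, (pdx (pdt (tdiff h u)) x t) ^ 2)
      + (1 / 2) * (∫ x in L₀..L, (tdiff h u x t) ^ 2) ≤ R * K * En := by
    calc (1 / 2) * (∫ x in L₀..L, (pdx (pdt (tdiff h u)) x t) ^ 2)
        + (1 / 2) * (∫ x in L₀..L, (tdiff h u x t) ^ 2)
        ≤ (1 / 2) * (R * K * En) + (1 / 2) * (R * K * En) :=
          add_le_add (mul_le_mul_of_nonneg_left hS3G (by norm_num))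
            (mul_le_mul_of_nonneg_left hS0G (by norm_num))
      _ = R * K * En := by ring
  have hcn1 : (0:ℝ) ≤ τ * (Eex * (L - L₀)) :=
    mul_nonneg hτ0.le (mul_nonneg hEexpos.le hB.le)
  have hw1 : (0:ℝ) ≤ T ^ 2 * (L - L₀) := mul_nonneg (sq_nonneg T) hB.le
  have hcn3 : (0:ℝ) ≤ τ * (Eex * (T ^ 2 * (L - L₀) + 1)) :=
    mul_nonneg hτ0.le (mul_nonneg hEexpos.le (by linarith only [hw1]))
  have hcn4 : (0:ℝ) ≤ τ * (Eex * (T ^ 2 * (L - L₀) + 2)) :=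
    mul_nonneg hτ0.le (mul_nonneg hEexpos.le (by linarith only [hw1]))
  have hT1 : |∫ x in L₀..L, ((β₂ * pdt (tdiff h u) x t * pdx (tdiff h u) x t
      + ρ₂ * pdt (tdiff h v) x t * pdx (tdiff h v) x t)
      * Real.exp (τ * phiW L₀ L T x t) * (L - x))| ≤
      (τ * (Eex * (L - L₀))) * ((β₂ + ρ₂) * (R * K * En)) :=
    habs1.trans (mul_le_mul_of_nonneg_left hQ1 hcn1)
  have hT2 : μ₂ * |∫ x in L₀..L, (pdx (pdt (tdiff h u)) x t * pdx (pdx (tdiff h u)) x t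
      * Real.exp (τ * phiW L₀ L T x t) * (L - x))| ≤
      μ₂ * ((τ * (Eex * (L - L₀))) * (R * K * En)) :=
    mul_le_mul_of_nonneg_left (habs2.trans (mul_le_mul_of_nonneg_left hQ2 hcn1)) hμ₂.le
  have hT3 : β₂ * |∫ x in L₀..L, ((pdt (tdiff h u) x t) ^ 2
      * Real.exp (τ * phiW L₀ L T x t) * (τ * T ^ 2 * (L - x) + 1))| ≤
      β₂ * ((τ * (Eex * (T ^ 2 * (L - L₀) + 1))) * (R * K * En)) :=
    mul_le_mul_of_nonneg_left (habs3.trans (mul_le_mul_of_nonneg_left hS1G hcn3)) hβ₂.le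
  have hT4 : μ₂ * τ * T ^ 2 * |∫ x in L₀..L, (pdx (pdt (tdiff h u)) x t * tdiff h u x t
      * Real.exp (τ * phiW L₀ L T x t) * (τ * T ^ 2 * (L - x) + 2))| ≤
      μ₂ * τ * T ^ 2 * ((τ * (Eex * (T ^ 2 * (L - L₀) + 2))) * (R * K * En)) :=
    mul_le_mul_of_nonneg_left (habs4.trans (mul_le_mul_of_nonneg_left hQ4 hcn4)) kpos.le
  -- upgrade τ to τ² in the first three terms
  have hY1 : (0:ℝ) ≤ Eex * (L - L₀) * ((β₂ + ρ₂) * (R * K * En)) :=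
    mul_nonneg (mul_nonneg hEexpos.le hB.le)
      (mul_nonneg (by linarith only [hβ₂, hρ₂]) hRKE)
  have hY2 : (0:ℝ) ≤ μ₂ * (Eex * (L - L₀) * (R * K * En)) :=
    mul_nonneg hμ₂.le (mul_nonneg (mul_nonneg hEexpos.le hB.le) hRKE)
  have hY3 : (0:ℝ) ≤ β₂ * (Eex * (T ^ 2 * (L - L₀) + 1) * (R * K * En)) :=
    mul_nonneg hβ₂.le (mul_nonneg (mul_nonneg hEexpos.le (by linarith only [hw1])) hRKE)
  have hmm1 : τ * (Eex * (L - L₀) * ((β₂ + ρ₂) * (R * K * En))) ≤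
      τ ^ 2 * (Eex * (L - L₀) * ((β₂ + ρ₂) * (R * K * En))) :=
    mul_le_mul_of_nonneg_right hττ2 hY1
  have hmm2 : τ * (μ₂ * (Eex * (L - L₀) * (R * K * En))) ≤
      τ ^ 2 * (μ₂ * (Eex * (L - L₀) * (R * K * En))) :=
    mul_le_mul_of_nonneg_right hττ2 hY2
  have hmm3 : τ * (β₂ * (Eex * (T ^ 2 * (L - L₀) + 1) * (R * K * En))) ≤
      τ ^ 2 * (β₂ * (Eex * (T ^ 2 * (L - L₀) + 1) * (R * K * En))) :=
    mul_le_mul_of_nonneg_right hττ2 hY3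
  linarith only [htot, hT1, hT2, hT3, hT4, hmm1, hmm2, hmm3]

/-- Estimate (79) of the paper: the boundary-in-time terms `H_d(0) − H_d(T)` of the
weighted multiplier identity are bounded below by `−C₃(E_d(T) + E_d(0))τ²e^{−τσ₀}`
with `σ₀ = (L − L₀)T²/4`. -/
theorem stmt_18 (L₀ L β₂ μ₂ lam₂ ρ₂ T h M : ℝ)
    (hL₀ : 0 < L₀) (hL : L₀ < L)
    (hβ₂ : 0 < β₂) (hμ₂ : 0 < μ₂) (hlam₂ : 0 < lam₂) (hρ₂ : 0 < ρ₂)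
    (hT : 0 < T) (hh : 0 < h) (hM : 0 < M) :
    ∃ C₃ > (0:ℝ), ∀ u v : ℝ → ℝ → ℝ,
      (∀ n : ℕ, ContDiff ℝ n (Function.uncurry u)) →
      (∀ n : ℕ, ContDiff ℝ n (Function.uncurry v)) →
      VKBeam β₂ μ₂ lam₂ ρ₂ L₀ L (T + h) u v →
      MBounded M L₀ L (T + h) u → MBounded M L₀ L (T + h) v →
      (∀ t ∈ Set.Icc (0:ℝ) T,
        tdiff h u L₀ t = 0 ∧ pdx (tdiff h u) L₀ t = 0 ∧ tdiff h v L₀ t = 0) →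
      ∀ τ : ℝ, 1 ≤ τ →
        Hd β₂ μ₂ ρ₂ L₀ L T h τ u v 0 - Hd β₂ μ₂ ρ₂ L₀ L T h τ u v T ≥
          -C₃ * (Ed β₂ μ₂ lam₂ ρ₂ L₀ L h u v T + Ed β₂ μ₂ lam₂ ρ₂ L₀ L h u v 0)
            * τ ^ 2 * Real.exp (-τ * ((L - L₀) * T ^ 2 / 4)) := by
  have hB : (0:ℝ) < L - L₀ := by linarith
  refine ⟨(((L - L₀) * (β₂ + ρ₂) + μ₂ * (L - L₀) + β₂ * (T ^ 2 * (L - L₀) + 1)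
      + μ₂ * T ^ 2 * (T ^ 2 * (L - L₀) + 2))
    * ((2 / β₂ + 2 / μ₂ + 2 / lam₂ + 2 / ρ₂ + 2)
      * (3 + (L - L₀) ^ 2 + (L - L₀) ^ 4 + 2 * M ^ 2 * (L - L₀) ^ 2))), ?_, ?_⟩
  · apply mul_pos
    · have c1 : 0 < (L - L₀) * (β₂ + ρ₂) := mul_pos hB (by linarith)
      have c2 : 0 < μ₂ * (L - L₀) := mul_pos hμ₂ hB
      have hTB : 0 < T ^ 2 * (L - L₀) := mul_pos (pow_pos hT 2) hB
      have c3 : 0 < β₂ * (T ^ 2 * (L - L₀) + 1) := mul_pos hβ₂ (by linarith)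
      have c4 : 0 < μ₂ * T ^ 2 * (T ^ 2 * (L - L₀) + 2) :=
        mul_pos (mul_pos hμ₂ (pow_pos hT 2)) (by linarith)
      linarith
    · apply mul_pos
      · have d1 := div_pos two_pos hβ₂
        have d2 := div_pos two_pos hμ₂
        have d3 := div_pos two_pos hlam₂
        have d4 := div_pos two_pos hρ₂
        linarith
      · positivity
  · intro u v hu' hv' _hVK hMu _hMv hbc τ hτ
    have hu : ContDiff ℝ (((⊤ : ℕ∞)) : WithTop ℕ∞) (Function.uncurry u) := contDiff_infty.mpr hu'
    have hv : ContDiff ℝ (((⊤ : ℕ∞)) : WithTop ℕ∞) (Function.uncurry v) := contDiff_infty.mpr hv'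
    obtain ⟨b00, b01, -⟩ := hbc 0 ⟨le_refl 0, hT.le⟩
    obtain ⟨bT0, bT1, -⟩ := hbc T ⟨hT.le, le_refl T⟩
    have hb0 := Hd_abs_bound L₀ L β₂ μ₂ lam₂ ρ₂ T h M hL hβ₂ hμ₂ hlam₂ hρ₂ hT hh hM
      u v hu hv hMu 0 (Or.inl rfl) b00 b01 τ hτ
    have hbT := Hd_abs_bound L₀ L β₂ μ₂ lam₂ ρ₂ T h M hL hβ₂ hμ₂ hlam₂ hρ₂ hT hh hM
      u v hu hv hMu T (Or.inr rfl) bT0 bT1 τ hτ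
    set C3 := (((L - L₀) * (β₂ + ρ₂) + μ₂ * (L - L₀) + β₂ * (T ^ 2 * (L - L₀) + 1)
      + μ₂ * T ^ 2 * (T ^ 2 * (L - L₀) + 2))
    * ((2 / β₂ + 2 / μ₂ + 2 / lam₂ + 2 / ρ₂ + 2)
      * (3 + (L - L₀) ^ 2 + (L - L₀) ^ 4 + 2 * M ^ 2 * (L - L₀) ^ 2))) with hC3
    have n0 := neg_abs_le (Hd β₂ μ₂ ρ₂ L₀ L T h τ u v 0)
    have nT := le_abs_self (Hd β₂ μ₂ ρ₂ L₀ L T h τ u v T)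
    have g1 : -(C3 * Ed β₂ μ₂ lam₂ ρ₂ L₀ L h u v 0 * τ ^ 2
        * Real.exp (-τ * ((L - L₀) * T ^ 2 / 4))) ≤ Hd β₂ μ₂ ρ₂ L₀ L T h τ u v 0 :=
      le_trans (neg_le_neg hb0) n0
    have g2 : Hd β₂ μ₂ ρ₂ L₀ L T h τ u v T ≤ C3 * Ed β₂ μ₂ lam₂ ρ₂ L₀ L h u v T * τ ^ 2
        * Real.exp (-τ * ((L - L₀) * T ^ 2 / 4)) := nT.trans hbT
    rw [ge_iff_le]
    calc -C3 * (Ed β₂ μ₂ lam₂ ρ₂ L₀ L h u v T + Ed β₂ μ₂ lam₂ ρ₂ L₀ L h u v 0)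
          * τ ^ 2 * Real.exp (-τ * ((L - L₀) * T ^ 2 / 4))
        = -(C3 * Ed β₂ μ₂ lam₂ ρ₂ L₀ L h u v 0 * τ ^ 2
            * Real.exp (-τ * ((L - L₀) * T ^ 2 / 4)))
          - C3 * Ed β₂ μ₂ lam₂ ρ₂ L₀ L h u v T * τ ^ 2
            * Real.exp (-τ * ((L - L₀) * T ^ 2 / 4)) := by ring
      _ ≤ Hd β₂ μ₂ ρ₂ L₀ L T h τ u v 0 - Hd β₂ μ₂ ρ₂ L₀ L T h τ u v T :=
          sub_le_sub g1 g2
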